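/- Let m,n be positive integers, A ∈ [0,1)^{m×n}, γ ∈ [0,1)^m with liminf_{‖q‖→∞, q ∈ ℤ^n} ‖q‖^n ⟨Aq − γ⟩^m = 0. Then there exists a decreasing function ψ : ℕ → [0,∞) with ∑_{q≥1} q^{n-1} ψ(q)^m ≤ 1 such that ⟨Aq − γ⟩ < ψ(‖q‖) for infinitely many q ∈ ℤ^n. -/

import Mathlib

open Filter

/-- The supremum norm of an integer vector, as a natural number. -/
def znn {n : ℕ} (q : Fin n → ℤ) : ℕ := Finset.univ.sup fun i => (q i).natAbs

/-- Supremum-norm distance of `y ∈ ℝ^m` to the integer lattice `ℤ^m`. -/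
noncomputable def dz {m : ℕ} (y : Fin m → ℝ) : ℝ := ⨅ p : Fin m → ℤ, ‖y - fun i => (p i : ℝ)‖

/-- `⟨Aq - γ⟩`, the approximation error. -/
noncomputable def approxErr {m n : ℕ} (A : Matrix (Fin m) (Fin n) ℝ) (γ : Fin m → ℝ)
    (q : Fin n → ℤ) : ℝ := dz (A.mulVec (fun i => (q i : ℝ)) - γ)

/-- `min_{q ∈ ℤ^n, l ≤ ‖q‖ ≤ t} ⟨Aq - γ⟩^m`. -/
noncomputable def minErr {m n : ℕ} (A : Matrix (Fin m) (Fin n) ℝ) (γ : Fin m → ℝ)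
    (l t : ℕ) : ℝ :=
  sInf {x | ∃ q : Fin n → ℤ, l ≤ znn q ∧ znn q ≤ t ∧ x = approxErr A γ q ^ m}

lemma approxErr_nonneg {m n : ℕ} (A : Matrix (Fin m) (Fin n) ℝ) (γ : Fin m → ℝ)
    (q : Fin n → ℤ) : 0 ≤ approxErr A γ q :=
  Real.iInf_nonneg fun _ => norm_nonneg _

theorem not_bad_implies_approximable (m n : ℕ) (hm : 0 < m) (hn : 0 < n)
    (A : Matrix (Fin m) (Fin n) ℝ) (γ : Fin m → ℝ)
    (hA : ∀ i j, 0 ≤ A i j ∧ A i j < 1) (hγ : ∀ i, 0 ≤ γ i ∧ γ i < 1)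
    (hliminf : ∀ ε : ℝ, 0 < ε → ∀ N : ℕ, ∃ q : Fin n → ℤ,
      N ≤ znn q ∧ (znn q : ℝ) ^ n * approxErr A γ q ^ m < ε) :
    ∃ ψ : ℕ → ℝ, Antitone ψ ∧ (∀ q, 0 ≤ ψ q) ∧
      Summable (fun q : ℕ => ((q + 1 : ℕ) : ℝ) ^ (n - 1) * ψ (q + 1) ^ m) ∧
      (∑' q : ℕ, ((q + 1 : ℕ) : ℝ) ^ (n - 1) * ψ (q + 1) ^ m) ≤ 1 ∧
      {q : Fin n → ℤ | approxErr A γ q < ψ (znn q)}.Infinite := by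
  -- Step 1: construct the sequence Q of good approximations
  have step : ∀ (k : ℕ) (prev : ℕ), ∃ q : Fin n → ℤ, prev + 1 ≤ znn q ∧
      (znn q : ℝ) ^ n * approxErr A γ q ^ m < (1/2) ^ (k+1) := by
    intro k prev
    obtain ⟨q, hq1, hq2⟩ := hliminf ((1/2) ^ (k+1)) (by positivity) (prev + 1)
    exact ⟨q, hq1, hq2⟩
  choose f hf1 hf2 using step
  set Q : ℕ → (Fin n → ℤ) := fun k =>
    Nat.rec (f 0 0) (fun k prev => f (k+1) (znn prev)) k with hQdef
  have hQ0 : Q 0 = f 0 0 := rfl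
  have hQs : ∀ k, Q (k+1) = f (k+1) (znn (Q k)) := fun k => rfl
  set N : ℕ → ℕ := fun k => znn (Q k) with hNdef
  have hN1 : ∀ k, 1 ≤ N k := by
    intro k
    cases k with
    | zero => exact le_trans (by norm_num) (hf1 0 0)
    | succ k => exact le_trans (by omega) (hf1 (k+1) (znn (Q k)))
  have hNmono : StrictMono N := by
    apply strictMono_nat_of_lt_succ
    intro k
    have := hf1 (k+1) (znn (Q k))
    simp only [hNdef, hQs]
    omega
  have hQ2 : ∀ k, (N k : ℝ) ^ n * approxErr A γ (Q k) ^ m < (1/2) ^ (k+1) := by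
    intro k
    cases k with
    | zero => exact hf2 0 0
    | succ k => exact hf2 (k+1) (znn (Q k))
  have hNpos : ∀ k, (0:ℝ) < (N k : ℝ) ^ n := by
    intro k
    have := hN1 k
    positivity
  -- the weights
  set c : ℕ → ℝ := fun k => (1/2) ^ (k+1) / (N k : ℝ) ^ n with hcdef
  have hc_nonneg : ∀ k, 0 ≤ c k := fun k => le_of_lt (by
    have := hNpos k; positivity)
  have hc_anti : Antitone c := by
    apply antitone_nat_of_succ_le
    intro k
    apply div_le_div₀ (by positivity)
    · apply pow_le_pow_of_le_one (by norm_num) (by norm_num); omega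
    · exact hNpos k
    · exact pow_le_pow_left₀ (by positivity) (by exact_mod_cast (hNmono (Nat.lt_succ_self k)).le) n
  have herr : ∀ k, approxErr A γ (Q k) ^ m < c k := by
    intro k
    rw [hcdef, lt_div_iff₀ (hNpos k)]
    calc approxErr A γ (Q k) ^ m * (N k : ℝ) ^ n
        = (N k : ℝ) ^ n * approxErr A γ (Q k) ^ m := by ring
      _ < _ := hQ2 k
  -- the index function
  have ex : ∀ t : ℕ, ∃ k, t ≤ N k := fun t => ⟨t, hNmono.le_apply⟩
  set idx : ℕ → ℕ := fun t => Nat.find (ex t) with hidxdef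
  have hidx_spec : ∀ t, t ≤ N (idx t) := fun t => Nat.find_spec (ex t)
  have hidx_mono : Monotone idx := by
    intro s t hst
    exact Nat.find_mono (fun k hk => le_trans hst hk)
  have hidxN : ∀ k, idx (N k) = k := by
    intro k
    rw [hidxdef, Nat.find_eq_iff]
    exact ⟨le_rfl, fun j hj => not_le.mpr (hNmono hj)⟩
  -- the function ψ
  set ψ : ℕ → ℝ := fun t => (c (idx t)) ^ ((m : ℝ)⁻¹) with hψdef
  have hψ_nonneg : ∀ t, 0 ≤ ψ t := fun t => Real.rpow_nonneg (hc_nonneg _) _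
  have hψ_anti : Antitone ψ := by
    intro s t hst
    exact Real.rpow_le_rpow (hc_nonneg _) (hc_anti (hidx_mono hst)) (by positivity)
  have hψ_pow : ∀ t, ψ t ^ m = c (idx t) := by
    intro t
    rw [hψdef]
    rw [← Real.rpow_natCast ((c (idx t)) ^ ((m : ℝ)⁻¹)) m, ← Real.rpow_mul (hc_nonneg _),
      inv_mul_cancel₀ (by exact_mod_cast hm.ne'), Real.rpow_one]
  -- geometric series facts
  have hgeo_summable : Summable (fun k : ℕ => (1/2 : ℝ) ^ (k+1)) := by
    have : Summable (fun k : ℕ => (1/2 : ℝ) ^ k) :=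
      summable_geometric_of_lt_one (by norm_num) (by norm_num)
    simpa [pow_succ] using this.mul_right (1/2 : ℝ)
  have hgeo_tsum : (∑' k : ℕ, (1/2 : ℝ) ^ (k+1)) = 1 := by
    have h1 : (∑' k : ℕ, (1/2 : ℝ) ^ k) = 2 := by
      rw [tsum_geometric_of_lt_one (by norm_num) (by norm_num)]; norm_num
    calc (∑' k : ℕ, (1/2 : ℝ) ^ (k+1)) = (∑' k : ℕ, (1/2 : ℝ) ^ k * (1/2)) := by
          simp [pow_succ]
      _ = (∑' k : ℕ, (1/2 : ℝ) ^ k) * (1/2) := tsum_mul_right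
      _ = 1 := by rw [h1]; norm_num
  -- partial sum bound
  have hpartial : ∀ T : ℕ, (∑ t ∈ Finset.range T,
      ((t + 1 : ℕ) : ℝ) ^ (n - 1) * ψ (t + 1) ^ m) ≤ 1 := by
    intro T
    have hsum_eq : (∑ t ∈ Finset.range T, ((t + 1 : ℕ) : ℝ) ^ (n - 1) * ψ (t + 1) ^ m)
        = ∑ k ∈ (Finset.range T).image (fun t => idx (t+1)),
            ∑ t ∈ (Finset.range T).filter (fun t => idx (t+1) = k),
              ((t + 1 : ℕ) : ℝ) ^ (n - 1) * ψ (t + 1) ^ m := by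
      rw [Finset.sum_fiberwise_of_maps_to (fun x hx => Finset.mem_image_of_mem _ hx)]
    rw [hsum_eq]
    have hinner : ∀ k, (∑ t ∈ (Finset.range T).filter (fun t => idx (t+1) = k),
        ((t + 1 : ℕ) : ℝ) ^ (n - 1) * ψ (t + 1) ^ m) ≤ (1/2) ^ (k+1) := by
      intro k
      have hbound : ∀ t ∈ (Finset.range T).filter (fun t => idx (t+1) = k),
          ((t + 1 : ℕ) : ℝ) ^ (n - 1) * ψ (t + 1) ^ m ≤ ((N k : ℝ)) ^ (n-1) * c k := by
        intro t ht
        rw [Finset.mem_filter] at ht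
        have hik : idx (t+1) = k := ht.2
        have htN : t + 1 ≤ N k := hik ▸ hidx_spec (t+1)
        rw [hψ_pow, hik]
        apply mul_le_mul_of_nonneg_right _ (hc_nonneg k)
        apply pow_le_pow_left₀ (by positivity)
        exact_mod_cast htN
      have hcard : ((Finset.range T).filter (fun t => idx (t+1) = k)).card ≤ N k := by
        have hsub : (Finset.range T).filter (fun t => idx (t+1) = k) ⊆ Finset.range (N k) := by
          intro t ht
          rw [Finset.mem_filter] at ht
          have : t + 1 ≤ N k := ht.2 ▸ hidx_spec (t+1)
          exact Finset.mem_range.mpr (by omega)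
        simpa using Finset.card_le_card hsub
      calc (∑ t ∈ (Finset.range T).filter (fun t => idx (t+1) = k),
            ((t + 1 : ℕ) : ℝ) ^ (n - 1) * ψ (t + 1) ^ m)
          ≤ ((Finset.range T).filter (fun t => idx (t+1) = k)).card •
              (((N k : ℝ)) ^ (n-1) * c k) := Finset.sum_le_card_nsmul _ _ _ hbound
        _ ≤ (N k) • (((N k : ℝ)) ^ (n-1) * c k) := by
            apply nsmul_le_nsmul_left _ hcard
            have := hN1 k
            positivity
        _ = (N k : ℝ) ^ n * c k := by
            rw [nsmul_eq_mul]
            rw [show (N k : ℝ) ^ n = (N k : ℝ) * (N k : ℝ) ^ (n-1) by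
              rw [← pow_succ']
              congr 1
              omega]
            ring
        _ = (1/2) ^ (k+1) := by
            rw [hcdef]
            field_simp
            exact div_self (hNpos k).ne'
    calc (∑ k ∈ (Finset.range T).image (fun t => idx (t+1)),
          ∑ t ∈ (Finset.range T).filter (fun t => idx (t+1) = k),
            ((t + 1 : ℕ) : ℝ) ^ (n - 1) * ψ (t + 1) ^ m)
        ≤ ∑ k ∈ (Finset.range T).image (fun t => idx (t+1)), (1/2 : ℝ) ^ (k+1) :=
          Finset.sum_le_sum (fun k _ => hinner k)
      _ ≤ ∑' k : ℕ, (1/2 : ℝ) ^ (k+1) :=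
          Summable.sum_le_tsum _ (fun k _ => by positivity) hgeo_summable
      _ = 1 := hgeo_tsum
  have hsummable : Summable (fun t : ℕ => ((t + 1 : ℕ) : ℝ) ^ (n - 1) * ψ (t + 1) ^ m) := by
    apply summable_of_sum_range_le (c := 1) (fun t => by
      have := hψ_nonneg (t+1); positivity) hpartial
  refine ⟨ψ, hψ_anti, hψ_nonneg, hsummable, Summable.tsum_le_of_sum_range_le hsummable hpartial, ?_⟩
  -- infinitude
  apply Set.infinite_of_injective_forall_mem (f := Q)
  case hi =>
    intro a b hab
    have : N a = N b := by rw [hNdef]; simp [hab]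
    exact hNmono.injective this
  case hf =>
    intro k
    show approxErr A γ (Q k) < ψ (znn (Q k))
    have hψval : ψ (znn (Q k)) = (c k) ^ ((m : ℝ)⁻¹) := by
      rw [hψdef]
      show (c (idx (N k))) ^ ((m : ℝ)⁻¹) = (c k) ^ ((m : ℝ)⁻¹)
      rw [hidxN k]
    rw [hψval]
    by_contra h
    push_neg at h
    have h1 : ((c k) ^ ((m : ℝ)⁻¹)) ^ m ≤ approxErr A γ (Q k) ^ m :=
      pow_le_pow_left₀ (Real.rpow_nonneg (hc_nonneg _) _) h m
    rw [← Real.rpow_natCast ((c k) ^ ((m : ℝ)⁻¹)) m, ← Real.rpow_mul (hc_nonneg _),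
      inv_mul_cancel₀ (by exact_mod_cast hm.ne'), Real.rpow_one] at h1
    exact absurd (herr k) (not_lt.mpr h1)
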